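/- Let μ be a finite measure on B and w̃ : B → ℝ measurable. Suppose there exist C > 0 and ν ≥ 1 such that for all integers k ≥ ν, (∫_B |w̃|^k dμ)^{1/k} ≤ C(M + k), where M := (∫_B |w̃|^ν dμ)^{1/ν}. Then there exists r₀ > 0, depending only on C and μ(B), such that ∫_B e^{r₀|w̃|} dμ < ∞; moreover the bound on this integral depends only on C, μ(B), and M. -/

import Mathlib

open MeasureTheory Nat

lemma exp_tsum' (x : ℝ) : Real.exp x = ∑' n : ℕ, x ^ n / (n ! : ℝ) := by
  rw [Real.exp_eq_exp_ℝ, NormedSpace.exp_eq_tsum_div]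

lemma pow_self_le' (j : ℕ) : ((j:ℝ))^j / (j ! : ℝ) ≤ Real.exp j := by
  rw [exp_tsum']
  exact Summable.le_tsum (Real.summable_pow_div_factorial (j:ℝ)) j (fun i _ => by positivity)

lemma term_ineq' (C M : ℝ) (hC : 0 < C) (hM : 0 ≤ M) (j : ℕ) :
    ((4*Real.exp 1*C)⁻¹)^j / (j ! : ℝ) * (M^j + (C*(M+(j:ℝ)))^j)
      ≤ ((4*Real.exp 1*C)⁻¹*M)^j/(j ! : ℝ) + (M/(2*Real.exp 1))^j/(j ! : ℝ) + (1/2)^j := by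
  set e := Real.exp 1 with he_def
  have he : 2 ≤ e := by
    have := Real.add_one_le_exp 1; linarith
  have he0 : 0 < e := by linarith
  have hfact : (0:ℝ) < (j ! : ℝ) := by positivity
  have hA : (M+(j:ℝ))^j ≤ 2^j * (M^j + (j:ℝ)^j) := by
    have h1 : M + (j:ℝ) ≤ 2 * max M (j:ℝ) := by
      have := le_max_left M (j:ℝ); have := le_max_right M (j:ℝ); linarith
    have h2 : (M+(j:ℝ))^j ≤ (2 * max M (j:ℝ))^j :=
      pow_le_pow_left₀ (by positivity) h1 j
    have h3 : (max M (j:ℝ))^j ≤ M^j + (j:ℝ)^j := by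
      rcases max_cases M (j:ℝ) with ⟨h, _⟩ | ⟨h, _⟩ <;> rw [h] <;>
        nlinarith [pow_nonneg hM j, pow_nonneg (Nat.cast_nonneg j : (0:ℝ) ≤ j) j]
    calc (M+(j:ℝ))^j ≤ (2 * max M (j:ℝ))^j := h2
      _ = 2^j * (max M (j:ℝ))^j := by rw [mul_pow]
      _ ≤ 2^j * (M^j + (j:ℝ)^j) := mul_le_mul_of_nonneg_left h3 (by positivity)
  have hjj : ((j:ℝ))^j ≤ e^j * (j ! : ℝ) := by
    have h := pow_self_le' j
    rw [div_le_iff₀ hfact] at h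
    calc ((j:ℝ))^j ≤ Real.exp j * (j ! : ℝ) := h
      _ = e^j * (j ! : ℝ) := by rw [he_def, Real.exp_one_pow]
  have key2 : ((4*e*C)⁻¹*(C*(M+(j:ℝ))))^j ≤ (M/(2*e))^j + (1/2)^j * (j ! : ℝ) := by
    have h0 : ((4*e*C)⁻¹*(C*(M+(j:ℝ))))^j = (M+(j:ℝ))^j * ((4*e)⁻¹)^j := by
      rw [← mul_pow]
      congr 1
      field_simp
    rw [h0]
    have h1 : (M+(j:ℝ))^j * ((4*e)⁻¹)^j ≤ (2^j * (M^j + (j:ℝ)^j)) * ((4*e)⁻¹)^j :=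
      mul_le_mul_of_nonneg_right hA (by positivity)
    have h2 : (2^j * (M^j + (j:ℝ)^j)) * ((4*e)⁻¹)^j = (M/(2*e))^j + ((j:ℝ)/(2*e))^j := by
      rw [div_pow, div_pow, inv_pow]
      field_simp
      rw [mul_pow, mul_pow, show (4:ℝ) = 2*2 by norm_num, mul_pow]
      ring
    have h3 : ((j:ℝ)/(2*e))^j ≤ (1/2)^j * (j ! : ℝ) := by
      rw [div_pow]
      rw [div_le_iff₀ (by positivity)]
      calc ((j:ℝ))^j ≤ e^j * (j ! : ℝ) := hjj
        _ = 1/2^j * (j ! : ℝ) * (2*e)^j := by rw [mul_pow]; field_simp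
        _ = (1/2)^j * (j ! : ℝ) * (2*e)^j := by rw [div_pow, one_pow]
    linarith [h1, h2 ▸ h1]
  have expand : ((4*e*C)⁻¹)^j * (M^j + (C*(M+(j:ℝ)))^j)
      = ((4*e*C)⁻¹*M)^j + ((4*e*C)⁻¹*(C*(M+(j:ℝ))))^j := by
    rw [mul_add, ← mul_pow, ← mul_pow]
  rw [div_mul_eq_mul_div, expand]
  rw [div_le_iff₀ hfact]
  calc ((4*e*C)⁻¹*M)^j + ((4*e*C)⁻¹*(C*(M+(j:ℝ))))^j
      ≤ ((4*e*C)⁻¹*M)^j + ((M/(2*e))^j + (1/2)^j * (j ! : ℝ)) := by linarith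
    _ = (((4*e*C)⁻¹*M)^j/(j ! : ℝ) + (M/(2*e))^j/(j ! : ℝ) + (1/2)^j) * (j ! : ℝ) := by
        field_simp; ring

/-- pointwise: for `0 ≤ t`, `0 < ν ≤ m`: `t ^ ν ≤ 1 + t ^ m`. -/
lemma rpow_le_one_add_pow' {t ν : ℝ} {m : ℕ} (ht : 0 ≤ t) (hν : 0 ≤ ν) (hm : ν ≤ (m:ℝ)) :
    t ^ ν ≤ 1 + t ^ m := by
  rcases le_or_gt t 1 with h1 | h1
  · have := Real.rpow_le_one ht h1 hν
    have : (0:ℝ) ≤ t ^ m := pow_nonneg ht m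
    nlinarith [Real.rpow_le_one ht h1 hν]
  · have h2 : t ^ ν ≤ t ^ (m:ℝ) := Real.rpow_le_rpow_of_exponent_le h1.le hm
    rw [Real.rpow_natCast] at h2
    linarith

/-- pointwise low-moment bound: `t^j ≤ M^(j-ν) t^ν + M^j` for `0 < M`, `j ≤ ν`. -/
lemma low_moment_pointwise {t M ν : ℝ} {j : ℕ} (ht : 0 ≤ t) (hM : 0 < M)
    (hjν : (j:ℝ) ≤ ν) : t ^ j ≤ M ^ ((j:ℝ) - ν) * t ^ ν + M ^ j := by
  rcases le_or_gt t M with h | h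
  · have h1 : t ^ j ≤ M ^ j := pow_le_pow_left₀ ht h j
    have h2 : 0 ≤ M ^ ((j:ℝ) - ν) * t ^ ν :=
      mul_nonneg (Real.rpow_nonneg hM.le _) (Real.rpow_nonneg ht _)
    linarith
  · have ht0 : 0 < t := lt_trans hM h
    have h1 : t ^ j = t ^ ((j:ℝ) - ν) * t ^ ν := by
      rw [← Real.rpow_add ht0, sub_add_cancel, Real.rpow_natCast]
    have h2 : t ^ ((j:ℝ) - ν) ≤ M ^ ((j:ℝ) - ν) :=
      Real.rpow_le_rpow_of_nonpos hM h.le (by linarith)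
    have h3 : 0 ≤ t ^ ν := Real.rpow_nonneg ht0.le _
    have h4 : (0:ℝ) ≤ M ^ j := pow_nonneg hM.le j
    nlinarith [mul_le_mul_of_nonneg_right h2 h3]

theorem exponential_integrability_step (C : ℝ) (hC : 0 < C) (V : ℝ) (hV : 0 < V) :
    ∃ r₀ : ℝ, 0 < r₀ ∧ ∃ K : ℝ → ℝ,
      ∀ (α : Type) [MeasurableSpace α] (μ : Measure α),
        (μ Set.univ).toReal = V →
        ∀ (w : α → ℝ), Measurable w →
        ∀ ν : ℝ, 1 ≤ ν →
        ∀ M : ℝ, M = (∫ x, |w x| ^ ν ∂μ) ^ (1 / ν) →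
        (∀ k : ℕ, ν ≤ (k : ℝ) → Integrable (fun x => |w x| ^ (k : ℝ)) μ) →
        (∀ k : ℕ, ν ≤ (k : ℝ) →
          (∫ x, |w x| ^ (k : ℝ) ∂μ) ^ (1 / (k : ℝ)) ≤ C * (M + (k : ℝ))) →
        Integrable (fun x => Real.exp (r₀ * |w x|)) μ ∧
          ∫ x, Real.exp (r₀ * |w x|) ∂μ ≤ K M := by
  have he2 : (2:ℝ) ≤ Real.exp 1 := by have := Real.add_one_le_exp 1; linarith
  have he0 : (0:ℝ) < Real.exp 1 := by linarith
  set r : ℝ := (4 * Real.exp 1 * C)⁻¹ with hr_def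
  have hr : 0 < r := by positivity
  refine ⟨r, hr, fun M => (1+V) * (Real.exp (r*M) + Real.exp (M/(2*Real.exp 1)) + 2), ?_⟩
  intro α _ μ hμV w hw ν hν M hM hInt hMom
  have hν0 : (0:ℝ) < ν := by linarith
  -- finite measure
  have hμtop : μ Set.univ ≠ ⊤ := by
    intro h; rw [h, ENNReal.toReal_top] at hμV; linarith
  haveI : IsFiniteMeasure μ := ⟨lt_top_iff_ne_top.mpr hμtop⟩
  set m : ℕ := ⌈ν⌉₊ with hm_def
  have hνm : ν ≤ (m:ℝ) := Nat.le_ceil ν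
  have hInt_m : Integrable (fun x => |w x| ^ m) μ := by
    have := hInt m hνm
    simpa [Real.rpow_natCast] using this
  have hwνmeas : Measurable (fun x => |w x| ^ ν) :=
    (Real.continuous_rpow_const hν0.le).measurable.comp hw.abs
  have hwνInt : Integrable (fun x => |w x| ^ ν) μ := by
    refine (((integrable_const (1:ℝ)).add hInt_m).mono' hwνmeas.aestronglyMeasurable ?_)
    refine ae_of_all _ fun x => ?_
    rw [Real.norm_eq_abs, abs_of_nonneg (Real.rpow_nonneg (abs_nonneg _) _)]
    exact rpow_le_one_add_pow' (abs_nonneg _) hν0.le hνm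
  have hXnn : 0 ≤ ∫ x, |w x| ^ ν ∂μ :=
    integral_nonneg fun x => Real.rpow_nonneg (abs_nonneg _) _
  have hMnn : 0 ≤ M := hM ▸ Real.rpow_nonneg hXnn _
  have hMν : M ^ ν = ∫ x, |w x| ^ ν ∂μ := by
    rw [hM, ← Real.rpow_mul hXnn, one_div_mul_cancel hν0.ne', Real.rpow_one]
  rcases eq_or_lt_of_le hMnn with hM0 | hMpos
  · -- degenerate case: M = 0, so w = 0 a.e.
    have hint0 : ∫ x, |w x| ^ ν ∂μ = 0 := by
      rw [← hMν, ← hM0, Real.zero_rpow hν0.ne']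
    have hw0 : (fun x => |w x| ^ ν) =ᵐ[μ] 0 :=
      (integral_eq_zero_iff_of_nonneg (fun x => Real.rpow_nonneg (abs_nonneg _) _) hwνInt).mp
        hint0
    have hwz : ∀ᵐ x ∂μ, Real.exp (r * |w x|) = 1 := by
      filter_upwards [hw0] with x hx
      have : |w x| = 0 := by
        have := (Real.rpow_eq_zero_iff_of_nonneg (abs_nonneg (w x))).mp hx
        exact this.1
      rw [this, mul_zero, Real.exp_zero]
    constructor
    · exact (integrable_const (1:ℝ)).congr (hwz.mono fun x h => h.symm)
    · rw [integral_congr_ae hwz, integral_const, smul_eq_mul, measureReal_def, hμV, mul_one, ← hM0]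
      simp only [mul_zero, zero_div, Real.exp_zero]
      nlinarith
  -- main case : M > 0
  -- Step 1: moment bounds for all natural j
  have key : ∀ j : ℕ, Integrable (fun x => |w x| ^ j) μ ∧
      ∫ x, |w x| ^ j ∂μ ≤ (1+V) * (M ^ j + (C*(M+(j:ℝ)))^j) := by
    intro j
    have hMj : (0:ℝ) ≤ M ^ j := pow_nonneg hMnn j
    have hCMj : (0:ℝ) ≤ (C*(M+(j:ℝ)))^j := by positivity
    rcases le_or_gt ν (j:ℝ) with hcase | hcase
    · -- high moments: from the hypothesis
      have hIj : Integrable (fun x => |w x| ^ j) μ := by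
        have := hInt j hcase
        simpa [Real.rpow_natCast] using this
      refine ⟨hIj, ?_⟩
      have hXj : 0 ≤ ∫ x, |w x| ^ j ∂μ := integral_nonneg fun x => pow_nonneg (abs_nonneg _) j
      have hj1 : (1:ℝ) ≤ (j:ℝ) := le_trans hν hcase
      have hj0 : (j:ℝ) ≠ 0 := by linarith
      have hmom := hMom j hcase
      rw [show (fun x => |w x| ^ ((j:ℕ):ℝ)) = fun x => |w x| ^ (j:ℕ) by
        funext x; rw [Real.rpow_natCast]] at hmom
      have h2 : ((∫ x, |w x| ^ j ∂μ) ^ (1/(j:ℝ))) ^ (j:ℝ) ≤ (C*(M+(j:ℝ))) ^ (j:ℝ) :=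
        Real.rpow_le_rpow (Real.rpow_nonneg hXj _) hmom (by positivity)
      rw [← Real.rpow_mul hXj, one_div_mul_cancel hj0, Real.rpow_one] at h2
      rw [Real.rpow_natCast] at h2
      nlinarith
    · -- low moments: interpolation against the ν-th moment
      have hjm : j ≤ m := by
        have : (j:ℝ) ≤ (m:ℝ) := le_trans hcase.le hνm
        exact_mod_cast this
      have hbnd : ∀ x : α, |w x| ^ j ≤ M ^ ((j:ℝ) - ν) * |w x| ^ ν + M ^ j :=
        fun x => low_moment_pointwise (abs_nonneg _) hMpos hcase.le
      have hIj : Integrable (fun x => |w x| ^ j) μ := by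
        refine ((integrable_const (1:ℝ)).add hInt_m).mono'
          ((hw.abs.pow_const j).aestronglyMeasurable) (ae_of_all _ fun x => ?_)
        rw [Real.norm_eq_abs, abs_of_nonneg (pow_nonneg (abs_nonneg _) j)]
        simp only [Pi.add_apply]
        rcases le_or_gt (|w x|) 1 with h1 | h1
        · nlinarith [pow_le_one₀ (abs_nonneg (w x)) h1 (n := j),
            pow_nonneg (abs_nonneg (w x)) m]
        · have := pow_le_pow_right₀ h1.le hjm
          nlinarith
      refine ⟨hIj, ?_⟩
      have hgInt : Integrable (fun x => M ^ ((j:ℝ) - ν) * |w x| ^ ν + M ^ j) μ :=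
        (hwνInt.const_mul _).add (integrable_const _)
      have h1 : ∫ x, |w x| ^ j ∂μ ≤ ∫ x, (M ^ ((j:ℝ) - ν) * |w x| ^ ν + M ^ j) ∂μ :=
        integral_mono hIj hgInt hbnd
      rw [integral_add (hwνInt.const_mul _) (integrable_const _), integral_const_mul,
        integral_const, smul_eq_mul, measureReal_def, hμV, ← hMν] at h1
      have h2 : M ^ ((j:ℝ) - ν) * M ^ ν = M ^ j := by
        rw [← Real.rpow_natCast M j, ← Real.rpow_add hMpos, sub_add_cancel]
      rw [h2] at h1
      nlinarith
  -- Step 2: termwise lintegral bounds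
  have hmeas_j : ∀ j : ℕ, Measurable fun x => ENNReal.ofReal (r^j * |w x|^j / (j ! : ℝ)) :=
    fun j => (((hw.abs.pow_const j).const_mul _).div_const _).ennreal_ofReal
  have hTj : ∀ j : ℕ, ∫⁻ x, ENNReal.ofReal (r^j * |w x|^j / (j ! : ℝ)) ∂μ
      ≤ ENNReal.ofReal ((1+V) * ((r*M)^j/(j ! :ℝ) + (M/(2*Real.exp 1))^j/(j ! :ℝ) + (1/2)^j)) := by
    intro j
    have hconst : (0:ℝ) ≤ r^j / (j ! : ℝ) := by positivity
    have heq : (fun x => ENNReal.ofReal (r^j * |w x|^j / (j ! : ℝ)))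
        = fun x => ENNReal.ofReal (r^j / (j ! : ℝ)) * ENNReal.ofReal (|w x|^j) := by
      funext x
      rw [← ENNReal.ofReal_mul hconst]
      ring_nf
    rw [heq, lintegral_const_mul _ ((hw.abs.pow_const j).ennreal_ofReal)]
    rw [← ofReal_integral_eq_lintegral_ofReal (key j).1
      (ae_of_all _ fun x => pow_nonneg (abs_nonneg _) j)]
    rw [← ENNReal.ofReal_mul hconst]
    apply ENNReal.ofReal_le_ofReal
    calc r^j/(j ! :ℝ) * ∫ x, |w x|^j ∂μ
        ≤ r^j/(j ! :ℝ) * ((1+V) * (M^j + (C*(M+(j:ℝ)))^j)) :=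
          mul_le_mul_of_nonneg_left (key j).2 hconst
      _ = (1+V) * (r^j/(j ! :ℝ) * (M^j + (C*(M+(j:ℝ)))^j)) := by ring
      _ ≤ (1+V) * ((r*M)^j/(j ! :ℝ) + (M/(2*Real.exp 1))^j/(j ! :ℝ) + (1/2)^j) :=
          mul_le_mul_of_nonneg_left (term_ineq' C M hC hMnn j) (by linarith)
  -- Step 3: pointwise series expansion of the exponential
  have hpt : ∀ x, ENNReal.ofReal (Real.exp (r * |w x|))
      = ∑' j : ℕ, ENNReal.ofReal (r^j * |w x|^j / (j ! : ℝ)) := by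
    intro x
    rw [exp_tsum' (r * |w x|)]
    rw [ENNReal.ofReal_tsum_of_nonneg (fun n => by positivity)
      (Real.summable_pow_div_factorial _)]
    congr 1
    funext j
    rw [mul_pow]
  -- Step 4: summability of the bounding series
  have hrM : (0:ℝ) ≤ r*M := mul_nonneg hr.le hMnn
  have hM2e : (0:ℝ) ≤ M/(2*Real.exp 1) := div_nonneg hMnn (by positivity)
  have hb_nonneg : ∀ j : ℕ,
      0 ≤ (1+V) * ((r*M)^j/(j ! :ℝ) + (M/(2*Real.exp 1))^j/(j ! :ℝ) + (1/2)^j) := by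
    intro j
    have h1 : (0:ℝ) ≤ (r*M)^j := pow_nonneg hrM j
    have h2 : (0:ℝ) ≤ (M/(2*Real.exp 1))^j := pow_nonneg hM2e j
    have h3 : (0:ℝ) ≤ ((1:ℝ)/2)^j := by positivity
    have h4 : (0:ℝ) ≤ (j ! : ℝ) := by positivity
    have := div_nonneg h1 h4
    have := div_nonneg h2 h4
    nlinarith
  have hsum_b : Summable (fun j : ℕ =>
      (r*M)^j/(j ! :ℝ) + (M/(2*Real.exp 1))^j/(j ! :ℝ) + (1/2)^j) :=
    ((Real.summable_pow_div_factorial (r*M)).add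
      (Real.summable_pow_div_factorial (M/(2*Real.exp 1)))).add
      (summable_geometric_of_lt_one (by norm_num) (by norm_num))
  have htsum_b : ∑' j : ℕ,
      ((1+V) * ((r*M)^j/(j ! :ℝ) + (M/(2*Real.exp 1))^j/(j ! :ℝ) + (1/2)^j))
      = (1+V) * (Real.exp (r*M) + Real.exp (M/(2*Real.exp 1)) + 2) := by
    rw [tsum_mul_left]
    congr 1
    rw [Summable.tsum_add ((Real.summable_pow_div_factorial (r*M)).add
        (Real.summable_pow_div_factorial (M/(2*Real.exp 1))))
        (summable_geometric_of_lt_one (by norm_num) (by norm_num)),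
      Summable.tsum_add (Real.summable_pow_div_factorial (r*M))
        (Real.summable_pow_div_factorial (M/(2*Real.exp 1))),
      ← exp_tsum', ← exp_tsum', tsum_geometric_of_lt_one (by norm_num) (by norm_num)]
    norm_num
  -- Step 5: the main lintegral estimate
  have hlin : ∫⁻ x, ENNReal.ofReal (Real.exp (r * |w x|)) ∂μ
      ≤ ENNReal.ofReal ((1+V) * (Real.exp (r*M) + Real.exp (M/(2*Real.exp 1)) + 2)) := by
    calc ∫⁻ x, ENNReal.ofReal (Real.exp (r * |w x|)) ∂μ
        = ∫⁻ x, ∑' j : ℕ, ENNReal.ofReal (r^j * |w x|^j / (j ! : ℝ)) ∂μ :=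
          lintegral_congr hpt
      _ = ∑' j : ℕ, ∫⁻ x, ENNReal.ofReal (r^j * |w x|^j / (j ! : ℝ)) ∂μ :=
          lintegral_tsum (fun j => (hmeas_j j).aemeasurable)
      _ ≤ ∑' j : ℕ, ENNReal.ofReal
            ((1+V) * ((r*M)^j/(j ! :ℝ) + (M/(2*Real.exp 1))^j/(j ! :ℝ) + (1/2)^j)) :=
          ENNReal.tsum_le_tsum hTj
      _ = ENNReal.ofReal (∑' j : ℕ,
            ((1+V) * ((r*M)^j/(j ! :ℝ) + (M/(2*Real.exp 1))^j/(j ! :ℝ) + (1/2)^j))) :=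
          (ENNReal.ofReal_tsum_of_nonneg hb_nonneg (hsum_b.mul_left _)).symm
      _ = ENNReal.ofReal ((1+V) * (Real.exp (r*M) + Real.exp (M/(2*Real.exp 1)) + 2)) := by
          rw [htsum_b]
  have hKnn : 0 ≤ (1+V) * (Real.exp (r*M) + Real.exp (M/(2*Real.exp 1)) + 2) := by
    have := Real.exp_pos (r*M)
    have := Real.exp_pos (M/(2*Real.exp 1))
    nlinarith
  have hnnae : 0 ≤ᵐ[μ] fun x => Real.exp (r * |w x|) :=
    ae_of_all _ fun x => (Real.exp_pos _).le
  have hmexp : AEStronglyMeasurable (fun x => Real.exp (r * |w x|)) μ :=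
    (Real.measurable_exp.comp (measurable_const.mul hw.abs)).aestronglyMeasurable
  constructor
  · refine ⟨hmexp, ?_⟩
    rw [hasFiniteIntegral_iff_ofReal hnnae]
    exact lt_of_le_of_lt hlin ENNReal.ofReal_lt_top
  · rw [integral_eq_lintegral_of_nonneg_ae hnnae hmexp]
    have hmono := ENNReal.toReal_mono ENNReal.ofReal_ne_top hlin
    rwa [ENNReal.toReal_ofReal hKnn] at hmono
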